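/- Let n ≥ 1 be an integer. For u > 0 define Ψ(u) = (1/(4π)) ∑_{k=0}^∞ (u+1)^{−k−1}/(2n + k − 1), and for z, w in the upper half-plane U with z ≠ w define 𝒢(z,w) = Ψ(u(z,w)) · (−4)^{n−1}/(z − w̄)^{2n−2}, where u(z,w) = |z − w|²/(4 Im z · Im w). Then, for each fixed w ∈ U, the function z ↦ (Im z)^{2n−2} 𝒢(z,w) has Wirtinger derivative ∂/∂z [ (Im z)^{2n−2} 𝒢(z,w) ] = −(1/(4π)) · (Im z)^{2n−2} · ((w − w̄)/(z − w)) · (−4)^{n−1}/(z − w̄)^{2n−1} at every z ∈ U with z ≠ w. -/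

import Mathlib

open MeasureTheory ComplexConjugate

/-- `Ψ(u) = (1/(4π)) ∑_{k=0}^∞ (u+1)^{-k-1} / (2n + k - 1)`. -/
noncomputable def PsiKer (n : ℕ) (u : ℝ) : ℝ :=
  (1 / (4 * Real.pi)) * ∑' k : ℕ, 1 / ((u + 1) ^ (k + 1) * ((2 * n + k - 1 : ℕ) : ℝ))

/-- The point-pair invariant `u(z,w) = |z - w|² / (4 Im z · Im w)`. -/
noncomputable def ptInv (z w : ℂ) : ℝ :=
  ‖z - w‖ ^ 2 / (4 * z.im * w.im)

/-- `𝒢(z,w) = Ψ(u(z,w)) · (-4)^{n-1} / (z - w̄)^{2n-2}`. -/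
noncomputable def Gker (n : ℕ) (z w : ℂ) : ℂ :=
  ((PsiKer n (ptInv z w) : ℝ) : ℂ) * (-4 : ℂ) ^ (n - 1) / (z - conj w) ^ (2 * n - 2)

lemma sub_conj_ne (z w : ℂ) (hz : 0 < z.im) (hw : 0 < w.im) : z - conj w ≠ 0 := by
  intro h
  have : (z - conj w).im = 0 := by rw [h]; simp
  simp [Complex.sub_im, Complex.conj_im] at this
  linarith

lemma conj_sub_ne (z w : ℂ) (hz : 0 < z.im) (hw : 0 < w.im) : conj z - w ≠ 0 := by
  intro h
  have : (conj z - w).im = 0 := by rw [h]; simp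
  simp [Complex.sub_im, Complex.conj_im] at this
  linarith

lemma normSq_split (z w : ℂ) :
    Complex.normSq (z - conj w) = ‖z - w‖ ^ 2 + 4 * z.im * w.im := by
  rw [Complex.sq_norm]
  simp [Complex.normSq_apply, Complex.sub_re, Complex.sub_im, Complex.conj_re, Complex.conj_im]
  ring

lemma prod_eq_normSq (z w : ℂ) :
    (z - conj w) * (conj z - w) = ((Complex.normSq (z - conj w) : ℝ) : ℂ) := by
  have : conj (z - conj w) = conj z - w := by simp [map_sub]
  rw [← this, Complex.mul_conj]

lemma psiKer_closed (n : ℕ) (hn : 1 ≤ n) (u q : ℝ) (hq0 : 0 < q) (hq1 : q < 1)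
    (hu : u + 1 = 1/q) :
    PsiKer n u = (1 / (4 * Real.pi)) *
      ((-Real.log (1 - q) - ∑ j ∈ Finset.range (2*n-2), q ^ (j+1) / (j+1)) / q ^ (2*n-2)) := by
  set m := 2*n-2 with hm
  have hlog : HasSum (fun k : ℕ => q ^ (k+1) / ((k:ℝ)+1)) (-Real.log (1-q)) :=
    Real.hasSum_pow_div_log_of_abs_lt_one (by rw [abs_of_pos hq0]; exact hq1)
  have h2 : HasSum (fun k : ℕ => q ^ ((k+m)+1) / (((k+m:ℕ):ℝ)+1))
      (-Real.log (1-q) - ∑ j ∈ Finset.range m, q ^ (j+1) / ((j:ℝ)+1)) := by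
    refine (hasSum_nat_add_iff (f := fun k : ℕ => q ^ (k+1) / ((k:ℝ)+1)) m).2 ?_
    rw [sub_add_cancel]; exact hlog
  have h3 := h2.div_const (q ^ m)
  have hfun : (fun k : ℕ => q ^ ((k+m)+1) / (((k+m:ℕ):ℝ)+1) / q ^ m)
      = (fun k : ℕ => 1 / ((u + 1) ^ (k + 1) * ((2 * n + k - 1 : ℕ) : ℝ))) := by
    funext k
    have hnat : 2*n + k - 1 = k + m + 1 := by omega
    rw [hnat, hu]
    rw [show (k+m)+1 = (k+1)+m from by omega, pow_add]
    have hqm : q ^ m ≠ 0 := pow_ne_zero _ hq0.ne'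
    have hq : q ^ (k+1) ≠ 0 := pow_ne_zero _ hq0.ne'
    push_cast
    rw [div_pow, one_pow]
    field_simp
    ring
  rw [hfun] at h3
  rw [PsiKer, h3.tsum_eq]

noncomputable def gAux (n : ℕ) (w : ℂ) (p : ℂ × ℂ) : ℂ :=
  ((-4:ℂ)^(n-1) / (4*(Real.pi:ℂ)*(4*(w.im:ℂ))^(2*n-2))) * (p.2 - w)^(2*n-2) *
    (-(Complex.log (1 - (w - conj w)*(p.2 - p.1)/((p.1 - conj w)*(p.2 - w)))) -
      ∑ j ∈ Finset.range (2*n-2),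
        ((w - conj w)*(p.2 - p.1)/((p.1 - conj w)*(p.2 - w)))^(j+1)/((j:ℂ)+1))


lemma key_eq (n : ℕ) (hn : 1 ≤ n) (w z : ℂ) (hw : 0 < w.im) (hz : 0 < z.im) (hzw : z ≠ w) :
    ((z.im:ℂ))^(2*n-2) * Gker n z w = gAux n w (z, conj z) := by
  have hzv : z - conj w ≠ 0 := sub_conj_ne z w hz hw
  have hcw : conj z - w ≠ 0 := conj_sub_ne z w hz hw
  have hN0 : 0 < Complex.normSq (z - conj w) := Complex.normSq_pos.2 hzv
  set N := Complex.normSq (z - conj w) with hN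
  set q : ℝ := 4 * z.im * w.im / N with hqdef
  have hq0 : 0 < q := by
    apply div_pos _ hN0
    have h4 : (0:ℝ) < 4 * z.im := by linarith
    exact mul_pos h4 hw
  have habs : 0 < ‖z - w‖ ^ 2 := by
    have h : z - w ≠ 0 := sub_ne_zero.2 hzw
    exact pow_pos (norm_pos_iff.2 h) 2
  have hq1 : q < 1 := by
    rw [hqdef, div_lt_one hN0, hN, normSq_split]
    linarith
  have hu : ptInv z w + 1 = 1/q := by
    rw [ptInv, hqdef, one_div_div]
    rw [hN, normSq_split]
    have h4 : (0:ℝ) < 4 * z.im * w.im := by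
      have h5 : (0:ℝ) < 4 * z.im := by linarith
      exact mul_pos h5 hw
    field_simp
  rw [Gker, psiKer_closed n hn _ q hq0 hq1 hu, gAux]
  have hnum : (w - conj w)*(conj z - z) = ((4*z.im*w.im :ℝ):ℂ) := by
    rw [Complex.sub_conj w, show conj z - z = -(z - conj z) from by ring, Complex.sub_conj z]
    push_cast
    linear_combination (-4*(z.im:ℂ)*(w.im:ℂ)) * Complex.I_mul_I
  have hQz : (w - conj w)*((z, conj z).2 - (z, conj z).1)/(((z, conj z).1 - conj w)*((z, conj z).2 - w)) = (q:ℂ) := by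
    show (w - conj w)*(conj z - z)/((z - conj w)*(conj z - w)) = (q:ℂ)
    rw [hnum, prod_eq_normSq, hqdef]
    push_cast
    ring
  rw [hQz]
  have h1q : 1 - (q:ℂ) = ((1-q:ℝ):ℂ) := by push_cast; ring
  have hlog : Complex.log (1 - (q:ℝ):ℂ) = ((Real.log (1-q):ℝ):ℂ) := by
    rw [h1q, ← Complex.ofReal_log (by linarith)]
  rw [hlog]
  have h4 : 4*(w.im:ℂ)*(z.im:ℂ) = (q:ℂ)*((z - conj w)*(conj z - w)) := by
    rw [prod_eq_normSq]
    have hthis : q * N = 4 * z.im * w.im := by rw [hqdef]; field_simp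
    have hc : ((q*N:ℝ):ℂ) = ((4*z.im*w.im:ℝ):ℂ) := by rw [hthis]
    push_cast at hc
    linear_combination -hc
  have hpow : (4*(w.im:ℂ))^(2*n-2)*((z.im:ℂ))^(2*n-2)
      = ((q:ℂ))^(2*n-2)*((z - conj w)^(2*n-2)*((conj z - w))^(2*n-2)) := by
    have := congrArg (· ^ (2*n-2)) h4
    simpa [mul_pow] using this
  have hpi : (Real.pi:ℂ) ≠ 0 := by exact_mod_cast Real.pi_ne_zero
  have hqC : ((q:ℝ):ℂ) ≠ 0 := by exact_mod_cast hq0.ne'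
  have haC : ((w.im:ℝ):ℂ) ≠ 0 := by exact_mod_cast hw.ne'
  push_cast
  field_simp
  linear_combination (
    (-((Real.log (1-q):ℝ):ℂ) - ∑ x ∈ Finset.range (2*n-2), ((q:ℝ):ℂ)^(x+1)/((x:ℂ)+1))) * hpow

lemma alg (pi4 Cc iz iw W V Z C : ℂ) (m : ℕ) (hpi : pi4 ≠ 0) (hzw : Z - W ≠ 0)
    (hzv : Z - V ≠ 0) (hcw : C - W ≠ 0) (hcv : C - V ≠ 0) (hiw4 : 4*iw ≠ 0) :
    -(1/pi4) * iz^m * ((W-V)/(Z-W)) * Cc / ((Z-V)^m * (Z-V)) =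
    (Cc/(pi4*(4*iw)^m)) * (C-W)^m *
      ( (-((W-V)*(C-V))/((Z-V)^2*(C-W))) * ((4*iw)^m * iz^m / ((Z-V)^m*(C-W)^m)) /
        ((Z-W)*(C-V)/((Z-V)*(C-W))) ) := by
  have h1 : (Z-V)^m ≠ 0 := pow_ne_zero _ hzv
  have h2 : (C-W)^m ≠ 0 := pow_ne_zero _ hcw
  have h3 : (4*iw)^m ≠ 0 := pow_ne_zero _ hiw4
  rw [div_div_eq_mul_div]
  field_simp

set_option maxHeartbeats 400000 in
lemma hasDeriv_partial (n : ℕ) (hn : 1 ≤ n) (w z : ℂ) (hw : 0 < w.im) (hz : 0 < z.im) (hzw : z ≠ w) :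
    HasDerivAt (fun ζ : ℂ => gAux n w (ζ, conj z))
      (-(1 / (4 * (Real.pi : ℂ))) * ((z.im : ℂ)) ^ (2 * n - 2) *
        ((w - conj w) / (z - w)) * (-4 : ℂ) ^ (n - 1) / (z - conj w) ^ (2 * n - 1)) z := by
  have hzv : z - conj w ≠ 0 := sub_conj_ne z w hz hw
  have hcw : conj z - w ≠ 0 := conj_sub_ne z w hz hw
  have hzw0 : z - w ≠ 0 := sub_ne_zero.2 hzw
  have hcv : conj z - conj w ≠ 0 := by
    exact sub_ne_zero.2 fun h => hzw (star_injective h)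
  have hN0 : 0 < Complex.normSq (z - conj w) := Complex.normSq_pos.2 hzv
  set N := Complex.normSq (z - conj w) with hN
  set q : ℝ := 4 * z.im * w.im / N with hqdef
  have hq0 : 0 < q := by
    apply div_pos _ hN0
    have h4 : (0:ℝ) < 4 * z.im := by linarith
    exact mul_pos h4 hw
  have habs : 0 < ‖z - w‖ ^ 2 := by
    have h : z - w ≠ 0 := sub_ne_zero.2 hzw
    exact pow_pos (norm_pos_iff.2 h) 2
  have hq1 : q < 1 := by
    rw [hqdef, div_lt_one hN0, hN, normSq_split]
    linarith
  set c := conj z with hc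
  set v := conj w with hv
  set m := 2*n-2 with hm
  set Cc : ℂ := (-4:ℂ)^(n-1) with hCc
  set K : ℂ := Cc / (4*(Real.pi:ℂ)*(4*(w.im:ℂ))^m) with hK
  set Qc : ℂ → ℂ := fun ζ => (w - v)*(c - ζ)/((ζ - v)*(c - w)) with hQc
  have hd0 : (z - v)*(c - w) ≠ 0 := mul_ne_zero hzv hcw
  -- value of Qc at z
  have hnum : (w - v)*(c - z) = ((4*z.im*w.im :ℝ):ℂ) := by
    rw [hv, hc, Complex.sub_conj w, show conj z - z = -(z - conj z) from by ring, Complex.sub_conj z]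
    push_cast
    linear_combination (-4*(z.im:ℂ)*(w.im:ℂ)) * Complex.I_mul_I
  have hQz : Qc z = (q:ℂ) := by
    rw [hQc]
    simp only
    rw [hnum, hv, hc, prod_eq_normSq, hqdef]
    push_cast
    ring
  have h1q : 1 - Qc z = ((1-q:ℝ):ℂ) := by rw [hQz]; push_cast; ring
  have h1q0 : (1:ℂ) - Qc z ≠ 0 := by
    rw [h1q]
    exact_mod_cast (by linarith : (1:ℝ) - q ≠ 0)
  have hQne1 : Qc z ≠ 1 := by
    intro h; exact h1q0 (by rw [h]; ring)
  -- derivative of Qc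
  set q' : ℂ := -((w-v)*(c-v))/((z-v)^2*(c-w)) with hq'
  have hQ : HasDerivAt Qc q' z := by
    have hn1 : HasDerivAt (fun ζ : ℂ => (w - v)*(c - ζ)) ((w-v)*(0-1)) z :=
      ((hasDerivAt_const z c).sub (hasDerivAt_id z)).const_mul (w-v)
    have hden : HasDerivAt (fun ζ : ℂ => (ζ - v)*(c - w)) (1*(c-w)) z :=
      ((hasDerivAt_id z).sub_const v).mul_const (c-w)
    have h := hn1.div hden hd0
    refine HasDerivAt.congr_deriv h ?_
    rw [hq']
    field_simp
    ring
  -- derivative of the log part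
  have hslit : (1:ℂ) - Qc z ∈ Complex.slitPlane := by
    rw [h1q]
    exact Complex.ofReal_mem_slitPlane.2 (by linarith)
  have hlogd : HasDerivAt (fun ζ => Complex.log (1 - Qc ζ)) ((0 - q')/(1 - Qc z)) z :=
    ((hasDerivAt_const z (1:ℂ)).sub hQ).clog hslit
  -- derivative of the sum part
  have hsumd : HasDerivAt (fun ζ => ∑ j ∈ Finset.range m, (Qc ζ)^(j+1)/((j:ℂ)+1))
      (∑ j ∈ Finset.range m, ((((j+1:ℕ):ℂ)) * (Qc z)^(j+1-1) * q')/((j:ℂ)+1)) z := by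
    refine HasDerivAt.fun_sum fun j _ => ?_
    exact (hQ.pow (j+1)).div_const _
  have hsum_eq : (∑ j ∈ Finset.range m, ((((j+1:ℕ):ℂ)) * (Qc z)^(j+1-1) * q')/((j:ℂ)+1))
      = ((Qc z)^m - 1)/(Qc z - 1) * q' := by
    rw [← geom_sum_eq hQne1, Finset.sum_mul]
    refine Finset.sum_congr rfl fun j _ => ?_
    have hj : ((j:ℂ)+1) ≠ 0 := Nat.cast_add_one_ne_zero j
    push_cast
    field_simp
  -- assemble
  have hg : HasDerivAt (fun ζ : ℂ => gAux n w (ζ, c))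
      (K*(c-w)^m * (-((0 - q')/(1 - Qc z)) - ((Qc z)^m - 1)/(Qc z - 1) * q')) z := by
    have h := ((hlogd.neg.sub (hsum_eq ▸ hsumd)).const_mul (K*(c-w)^m))
    exact h
  convert hg using 1
  -- final algebra
  have h4 : 4*(w.im:ℂ)*(z.im:ℂ) = (q:ℂ)*((z - v)*(c - w)) := by
    rw [hv, hc, prod_eq_normSq]
    have hthis : q * N = 4 * z.im * w.im := by rw [hqdef]; field_simp
    have hcc : ((q*N:ℝ):ℂ) = ((4*z.im*w.im:ℝ):ℂ) := by rw [hthis]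
    push_cast at hcc
    linear_combination -hcc
  have hpow : (4*(w.im:ℂ))^m*((z.im:ℂ))^m = ((q:ℂ))^m*((z - v)^m*((c - w))^m) := by
    have := congrArg (· ^ m) h4
    simpa [mul_pow] using this
  have hnum' : (w-v)*(c-z) = 4*(z.im:ℂ)*(w.im:ℂ) := by rw [hnum]; push_cast; ring
  have hrel : (1 - (q:ℂ))*((z-v)*(c-w)) = (z-w)*(c-v) := by
    linear_combination hnum' + h4
  have hq1C : (1:ℂ) - (q:ℂ) ≠ 0 := by
    exact_mod_cast (by linarith : (1:ℝ) - q ≠ 0)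
  have hq1C' : ((q:ℝ):ℂ) - 1 ≠ 0 := fun h => hq1C (by linear_combination -h)
  have hpi : (Real.pi:ℂ) ≠ 0 := by exact_mod_cast Real.pi_ne_zero
  have hiw : ((w.im:ℝ):ℂ) ≠ 0 := by exact_mod_cast hw.ne'
  rw [hQz]
  have hB : (K*(c-w)^m * (-((0 - q')/(1 - (q:ℂ))) - (((q:ℂ))^m - 1)/((q:ℂ) - 1) * q'))
      = K*(c-w)^m * (q' * ((q:ℂ))^m/(1 - (q:ℂ))) := by
    field_simp
    ring
  rw [hB]
  have hqm : ((q:ℂ))^m = (4*(w.im:ℂ))^m * ((z.im:ℂ))^m / ((z - v)^m*(c - w)^m) := by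
    rw [eq_div_iff (by exact mul_ne_zero (pow_ne_zero _ hzv) (pow_ne_zero _ hcw))]
    linear_combination -hpow
  have h1qrel : 1 - (q:ℂ) = (z-w)*(c-v)/((z-v)*(c-w)) := by
    rw [eq_div_iff hd0]
    exact hrel
  have h4iw : (4*(w.im:ℂ)) ≠ 0 := by
    intro h
    exact hiw (by linear_combination h/4)
  have hpi4 : (4*(Real.pi:ℂ)) ≠ 0 := by
    intro h
    exact hpi (by linear_combination h/4)
  rw [hqm, h1qrel, hq', hK, hCc, show 2*n-1 = m+1 from by omega, pow_succ]
  exact alg (4*(Real.pi:ℂ)) ((-4:ℂ)^(n-1)) ((z.im:ℝ):ℂ) ((w.im:ℝ):ℂ) w v z c m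
    hpi4 hzw0 hzv hcw hcv h4iw

lemma gAux_diff (n : ℕ) (hn : 1 ≤ n) (w z : ℂ) (hw : 0 < w.im) (hz : 0 < z.im) (hzw : z ≠ w) :
    DifferentiableAt ℂ (gAux n w) (z, conj z) := by
  have hzv : z - conj w ≠ 0 := sub_conj_ne z w hz hw
  have hcw : conj z - w ≠ 0 := conj_sub_ne z w hz hw
  have hN0 : 0 < Complex.normSq (z - conj w) := Complex.normSq_pos.2 hzv
  set N := Complex.normSq (z - conj w) with hN
  set q : ℝ := 4 * z.im * w.im / N with hqdef
  have hq0 : 0 < q := by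
    apply div_pos _ hN0
    have h4 : (0:ℝ) < 4 * z.im := by linarith
    exact mul_pos h4 hw
  have habs : 0 < ‖z - w‖ ^ 2 := by
    have h : z - w ≠ 0 := sub_ne_zero.2 hzw
    exact pow_pos (norm_pos_iff.2 h) 2
  have hq1 : q < 1 := by
    rw [hqdef, div_lt_one hN0, hN, normSq_split]
    linarith
  set Qf : ℂ × ℂ → ℂ := fun p => (w - conj w)*(p.2 - p.1)/((p.1 - conj w)*(p.2 - w)) with hQf
  have hd0 : ((z, conj z).1 - conj w)*((z, conj z).2 - w) ≠ 0 := mul_ne_zero hzv hcw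
  have hQdiff : DifferentiableAt ℂ Qf (z, conj z) := by
    rw [hQf]
    simp only [div_eq_mul_inv]
    exact ((differentiableAt_const _).mul (differentiableAt_snd.sub differentiableAt_fst)).mul
      ((((differentiableAt_fst.sub_const _).mul (differentiableAt_snd.sub_const _))).inv hd0)
  have hnum : (w - conj w)*(conj z - z) = ((4*z.im*w.im :ℝ):ℂ) := by
    rw [Complex.sub_conj w, show conj z - z = -(z - conj z) from by ring, Complex.sub_conj z]
    push_cast
    linear_combination (-4*(z.im:ℂ)*(w.im:ℂ)) * Complex.I_mul_I
  have hQz : Qf (z, conj z) = (q:ℂ) := by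
    rw [hQf]
    simp only
    rw [hnum, prod_eq_normSq, hqdef]
    push_cast
    ring
  have hslit : (1:ℂ) - Qf (z, conj z) ∈ Complex.slitPlane := by
    rw [hQz, show (1:ℂ) - (q:ℝ) = ((1-q:ℝ):ℂ) from by push_cast; ring]
    exact Complex.ofReal_mem_slitPlane.2 (by linarith)
  have hlogdiff : DifferentiableAt ℂ (fun p => Complex.log (1 - Qf p)) (z, conj z) :=
    ((differentiableAt_const 1).sub hQdiff).clog hslit
  have hsumdiff : DifferentiableAt ℂ
      (fun p => ∑ j ∈ Finset.range (2*n-2), (Qf p)^(j+1)/((j:ℂ)+1)) (z, conj z) :=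
    by
    refine DifferentiableAt.fun_sum fun j _ => ?_
    simp only [div_eq_mul_inv]
    exact (hQdiff.pow (j+1)).mul (differentiableAt_const _)
  have heq : gAux n w = fun p : ℂ × ℂ =>
      ((-4:ℂ)^(n-1) / (4*(Real.pi:ℂ)*(4*(w.im:ℂ))^(2*n-2))) * (p.2 - w)^(2*n-2) *
        (-(Complex.log (1 - Qf p)) - ∑ j ∈ Finset.range (2*n-2), (Qf p)^(j+1)/((j:ℂ)+1)) := rfl
  rw [heq]
  exact (((differentiableAt_const _).mul ((differentiableAt_snd.sub_const w).pow _)).mul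
    (hlogdiff.neg.sub hsumdiff))

/-- For each fixed `w` in the upper half-plane, the function
`z ↦ (Im z)^{2n-2} 𝒢(z,w)` has Wirtinger derivative
`∂/∂z [ (Im z)^{2n-2} 𝒢(z,w) ]
  = -(1/(4π)) (Im z)^{2n-2} ((w - w̄)/(z - w)) (-4)^{n-1}/(z - w̄)^{2n-1}`
at every `z` in the upper half-plane with `z ≠ w`.  The Wirtinger derivative `∂/∂z` of a
real-differentiable map with (real) Fréchet derivative `L` is `(1/2)(L 1 - i · L i)`. -/
theorem stmt19 (n : ℕ) (hn : 1 ≤ n) (w : ℂ) (hw : 0 < w.im)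
    (z : ℂ) (hz : 0 < z.im) (hzw : z ≠ w) :
    ∃ L : ℂ →L[ℝ] ℂ,
      HasFDerivAt (fun z : ℂ => ((z.im : ℂ)) ^ (2 * n - 2) * Gker n z w) L z ∧
      (1 / 2 : ℂ) * (L 1 - Complex.I * L Complex.I) =
        -(1 / (4 * (Real.pi : ℂ))) * ((z.im : ℂ)) ^ (2 * n - 2) *
          ((w - conj w) / (z - w)) * (-4 : ℂ) ^ (n - 1) / (z - conj w) ^ (2 * n - 1) := by
  have hdiff : DifferentiableAt ℂ (gAux n w) (z, conj z) := gAux_diff n hn w z hw hz hzw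
  set Dg := fderiv ℂ (gAux n w) (z, conj z) with hDgdef
  have hDg : HasFDerivAt (gAux n w) Dg (z, conj z) := hdiff.hasFDerivAt
  set T : ℂ →L[ℝ] ℂ × ℂ :=
    (ContinuousLinearMap.id ℝ ℂ).prod (Complex.conjCLE.toContinuousLinearMap) with hT
  have hTd : HasFDerivAt (fun x : ℂ => (x, conj x)) T z := T.hasFDerivAt
  have hcomp : HasFDerivAt (fun x : ℂ => gAux n w (x, conj x))
      ((Dg.restrictScalars ℝ).comp T) z := by
    have hh := (hDg.restrictScalars ℝ).comp z hTd
    exact hh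
  have hS : IsOpen {x : ℂ | 0 < x.im ∧ x ≠ w} := by
    have h1 : IsOpen {x : ℂ | 0 < x.im} := isOpen_lt continuous_const Complex.continuous_im
    have h2 : IsOpen {x : ℂ | x ≠ w} := isOpen_compl_singleton
    exact h1.inter h2
  have hmem : {x : ℂ | 0 < x.im ∧ x ≠ w} ∈ nhds z := hS.mem_nhds ⟨hz, hzw⟩
  have hev : (fun x : ℂ => ((x.im:ℂ))^(2*n-2) * Gker n x w) =ᶠ[nhds z]
      (fun x : ℂ => gAux n w (x, conj x)) := by
    filter_upwards [hmem] with x hx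
    exact key_eq n hn w x hw hx.1 hx.2
  have hF : HasFDerivAt (fun z : ℂ => ((z.im : ℂ)) ^ (2 * n - 2) * Gker n z w)
      ((Dg.restrictScalars ℝ).comp T) z := hcomp.congr_of_eventuallyEq hev
  refine ⟨(Dg.restrictScalars ℝ).comp T, hF, ?_⟩
  -- compute partial derivative value
  have hinl : HasFDerivAt (fun ζ : ℂ => (ζ, conj z))
      ((ContinuousLinearMap.id ℂ ℂ).prod (0 : ℂ →L[ℂ] ℂ)) z :=
    (hasFDerivAt_id z).prodMk (hasFDerivAt_const _ z)
  have hpar : HasDerivAt (fun ζ : ℂ => gAux n w (ζ, conj z))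
      ((Dg.comp ((ContinuousLinearMap.id ℂ ℂ).prod (0 : ℂ →L[ℂ] ℂ))) 1) z :=
    by
    have hh := (hDg.comp z hinl).hasDerivAt
    exact hh
  have hD1 : Dg ((1:ℂ), (0:ℂ)) =
      -(1 / (4 * (Real.pi : ℂ))) * ((z.im : ℂ)) ^ (2 * n - 2) *
        ((w - conj w) / (z - w)) * (-4 : ℂ) ^ (n - 1) / (z - conj w) ^ (2 * n - 1) := by
    have h := hpar.unique (hasDeriv_partial n hn w z hw hz hzw)
    rw [← h]
    simp
  -- evaluate L
  have hL1 : ((Dg.restrictScalars ℝ).comp T) 1 = Dg ((1:ℂ),(0:ℂ)) + Dg ((0:ℂ),(1:ℂ)) := by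
    rw [← map_add]
    simp [hT]
  have hLI : ((Dg.restrictScalars ℝ).comp T) Complex.I
      = Complex.I * Dg ((1:ℂ),(0:ℂ)) - Complex.I * Dg ((0:ℂ),(1:ℂ)) := by
    have h1 : ((Complex.I : ℂ), -Complex.I)
        = Complex.I • ((1:ℂ),(0:ℂ)) + (-Complex.I) • ((0:ℂ),(1:ℂ)) := by
      simp [Prod.ext_iff]
    have h2 : ((Dg.restrictScalars ℝ).comp T) Complex.I = Dg (Complex.I, -Complex.I) := by
      simp [hT]
    rw [h2, h1, map_add, _root_.map_smul, _root_.map_smul]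
    simp [smul_eq_mul]
    ring
  rw [hL1, hLI, ← hD1]
  set D1 := Dg ((1:ℂ),(0:ℂ))
  set D2 := Dg ((0:ℂ),(1:ℂ))
  linear_combination ((D2 - D1)/2) * Complex.I_mul_I
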